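/- Let M = diag(M_{m_1}, …, M_{m_R}) be block-diagonal with blocks M_{m_g} = (e_{m_g} e_{m_g}' − I_{m_g})/(m_g − 1), where not all group sizes m_g are equal (and each m_g ≥ 2). Then there exists λ with |λ| < 1 such that M (I − λM)^{−1} is NOT in the linear span of {I, M}. -/
import Mathlib


open Matrix

/-- With block-diagonal exclusive group means and unequal group sizes, there is some
`|λ| < 1` for which `M (I - λM)⁻¹` is not a linear combination of `I` and `M`, so linear
instruments are not collinear and the peer effect is identifiable. -/
theorem exclusive_group_mean_varying_sizes_identification
    (R : ℕ) (m : Fin R → ℕ) (hm : ∀ g, 2 ≤ m g)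
    (hne : ∃ g₁ g₂, m g₁ ≠ m g₂)
    (M : Matrix ((g : Fin R) × Fin (m g)) ((g : Fin R) × Fin (m g)) ℝ)
    (hM : ∀ x y, M x y =
      if x.1 = y.1 ∧ x ≠ y then 1 / ((m x.1 : ℝ) - 1) else 0) :
    ∃ lam : ℝ, |lam| < 1 ∧ IsUnit (1 - lam • M) ∧
      ∀ c₁ c₂ : ℝ,
        M * (1 - lam • M)⁻¹ ≠
          c₁ • (1 : Matrix ((g : Fin R) × Fin (m g)) ((g : Fin R) × Fin (m g)) ℝ) + c₂ • M := by
  classical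
  set a : Fin R → ℝ := fun g => ((m g : ℝ) - 1)⁻¹ with ha_def
  have hm1 : ∀ g, (0:ℝ) < (m g : ℝ) - 1 := by
    intro g
    have h2 : (2:ℝ) ≤ (m g : ℝ) := by exact_mod_cast hm g
    linarith
  have ha_pos : ∀ g, 0 < a g := fun g => inv_pos.mpr (hm1 g)
  have hma : ∀ g, ((m g : ℝ) - 1) * a g = 1 := fun g => mul_inv_cancel₀ (ne_of_gt (hm1 g))
  have h2a : ∀ g, (2 + a g) ≠ 0 := fun g => by have := ha_pos g; linarith
  set q : Fin R → ℝ := fun g => 2 / (2 + a g) with hq_def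
  set p : Fin R → ℝ := fun g => 2 * (1 + a g) / (2 + a g) with hp_def
  have key1 : ∀ g, p g - q g * a g / 2 = 1 := by
    intro g; have := h2a g
    simp only [hp_def, hq_def]
    field_simp
    ring
  have key2 : ∀ g, q g - p g / 2 - q g * (1 - a g) / 2 = 0 := by
    intro g; have := h2a g
    simp only [hp_def, hq_def]
    field_simp
    ring
  have hM' : ∀ x y, M x y = if x.1 = y.1 ∧ x ≠ y then a x.1 else 0 := by
    intro x y; rw [hM]; simp [ha_def, one_div]
  have hMdiag : ∀ x, M x x = 0 := by intro x; rw [hM']; simp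
  have hMoff : ∀ x y, x.1 ≠ y.1 → M x y = 0 := by
    intro x y h; rw [hM', if_neg]; tauto
  have hMij : ∀ (g : Fin R) (i j : Fin (m g)),
      M ⟨g, i⟩ ⟨g, j⟩ = if i = j then 0 else a g := by
    intro g i j
    rw [hM']
    by_cases h : i = j
    · subst h; rw [if_neg (by simp), if_pos rfl]
    · have hne2 : (⟨g, i⟩ : (g : Fin R) × Fin (m g)) ≠ ⟨g, j⟩ := by simp [h]
      rw [if_pos ⟨rfl, hne2⟩, if_neg h]
  have hsig : ∀ f : ((g : Fin R) × Fin (m g)) → ℝ,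
      ∑ k, f k = ∑ g : Fin R, ∑ i : Fin (m g), f ⟨g, i⟩ := by
    intro f; rw [← Finset.univ_sigma_univ, Finset.sum_sigma]
  -- M² lemma
  have hMsq : ∀ x y, ∑ k, M x k * M k y
      = (1 - a x.1) * M x y + (if x = y then a x.1 else 0) := by
    rintro ⟨gx, ix⟩ ⟨gy, iy⟩
    rw [hsig]
    rw [Finset.sum_eq_single gx]
    · by_cases hg : gx = gy
      · subst hg
        have hterm : ∀ i : Fin (m gx),
            M ⟨gx, ix⟩ ⟨gx, i⟩ * M ⟨gx, i⟩ ⟨gx, iy⟩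
            = a gx ^ 2 - (if i = ix then a gx ^ 2 else 0)
              - (if i = iy then a gx ^ 2 else 0)
              + (if i = ix then (if ix = iy then a gx ^ 2 else 0) else 0) := by
          intro i
          rw [hMij, hMij]
          by_cases h1 : i = ix <;> by_cases h2 : i = iy
          · have h3 : ix = iy := h1.symm.trans h2
            simp only [if_pos h1, if_pos h1.symm, if_pos h2, if_pos h3]; ring
          · have h3 : ix ≠ iy := fun h => h2 (h1.trans h)
            simp only [if_pos h1, if_pos h1.symm, if_neg h2, if_neg h3]; ring
          · have h3 : ix ≠ iy := fun h => h1 (h2.trans h.symm)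
            simp only [if_neg h1, if_neg (fun h => h1 h.symm : ¬ ix = i), if_pos h2, if_neg h3]
            ring
          · simp only [if_neg h1, if_neg (fun h => h1 h.symm : ¬ ix = i), if_neg h2]; ring
        rw [Finset.sum_congr rfl (fun i _ => hterm i)]
        have hcard : (Finset.univ : Finset (Fin (m gx))).card = m gx := by simp
        have hsum1 : ∀ c : ℝ, ∑ i : Fin (m gx), (if i = ix then c else 0) = c := by
          intro c; simp
        have hsum2 : ∀ c : ℝ, ∑ i : Fin (m gx), (if i = iy then c else 0) = c := by
          intro c; simp
        simp only [Finset.sum_add_distrib, Finset.sum_sub_distrib, hsum1, hsum2,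
          Finset.sum_const, hcard, nsmul_eq_mul]
        rw [hMij]
        have hsigeq : ((⟨gx, ix⟩ : (g : Fin R) × Fin (m g)) = ⟨gx, iy⟩) ↔ ix = iy := by simp
        rw [if_congr hsigeq rfl rfl]
        have hkey : ((m gx : ℝ) - 1) * a gx = 1 := hma gx
        by_cases h3 : ix = iy
        · simp only [if_pos h3]
          linear_combination (a gx) * hkey
        · simp only [if_neg h3]
          linear_combination (a gx) * hkey
      · have hz : ∀ i : Fin (m gx), M ⟨gx, ix⟩ ⟨gx, i⟩ * M ⟨gx, i⟩ ⟨gy, iy⟩ = 0 := by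
          intro i
          rw [hMoff ⟨gx, i⟩ ⟨gy, iy⟩ hg, mul_zero]
        rw [Finset.sum_congr rfl (fun i _ => hz i), Finset.sum_const_zero]
        have hxy : (⟨gx, ix⟩ : (g : Fin R) × Fin (m g)) ≠ ⟨gy, iy⟩ := by
          intro h; exact hg (congrArg Sigma.fst h)
        rw [hMoff ⟨gx, ix⟩ ⟨gy, iy⟩ hg, if_neg hxy]
        ring
    · intro g _ hgne
      have hz : ∀ i : Fin (m g), M ⟨gx, ix⟩ ⟨g, i⟩ * M ⟨g, i⟩ ⟨gy, iy⟩ = 0 := by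
        intro i
        rw [hMoff ⟨gx, ix⟩ ⟨g, i⟩ (by simpa using (Ne.symm hgne)), zero_mul]
      rw [Finset.sum_congr rfl (fun i _ => hz i), Finset.sum_const_zero]
    · intro h; exact absurd (Finset.mem_univ gx) h
  -- explicit inverse
  set N : Matrix ((g : Fin R) × Fin (m g)) ((g : Fin R) × Fin (m g)) ℝ :=
    fun x y => (if x = y then p x.1 else 0) + q x.1 * M x y with hN_def
  have hsumN : ∀ x y, ∑ k, M x k * N k y
      = p y.1 * M x y + q x.1 * ((1 - a x.1) * M x y + (if x = y then a x.1 else 0)) := by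
    intro x y
    have hqx : ∀ k, M x k * q k.1 = M x k * q x.1 := by
      intro k
      by_cases hk2 : k.1 = x.1
      · rw [hk2]
      · rw [hMoff x k (fun h => hk2 h.symm)]; ring
    have hexp : ∀ k, M x k * N k y
        = (if k = y then M x k * p k.1 else 0) + q x.1 * (M x k * M k y) := by
      intro k
      show M x k * ((if k = y then p k.1 else 0) + q k.1 * M k y) = _
      by_cases hk : k = y
      · rw [if_pos hk, if_pos hk]
        linear_combination (M k y) * hqx k
      · rw [if_neg hk, if_neg hk]
        linear_combination (M k y) * hqx k
    rw [Finset.sum_congr rfl (fun k _ => hexp k), Finset.sum_add_distrib,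
      ← Finset.mul_sum, hMsq]
    have h1 : ∑ k, (if k = y then M x k * p k.1 else 0) = M x y * p y.1 := by
      simp
    rw [h1]
    ring
  have hNinv : (1 - (1/2 : ℝ) • M) * N = 1 := by
    ext x y
    rw [Matrix.mul_apply]
    have hexp : ∀ k, (1 - (1/2 : ℝ) • M) x k * N k y
        = (if x = k then N k y else 0) - (1/2) * (M x k * N k y) := by
      intro k
      have h1 : (1 - (1/2 : ℝ) • M) x k = (if x = k then 1 else 0) - (1/2) * M x k := by
        simp [Matrix.sub_apply, Matrix.one_apply, Matrix.smul_apply]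
      rw [h1]
      by_cases h : x = k
      · rw [if_pos h, if_pos h]; ring
      · rw [if_neg h, if_neg h]; ring
    rw [Finset.sum_congr rfl (fun k _ => hexp k), Finset.sum_sub_distrib,
      ← Finset.mul_sum, hsumN]
    have h1 : ∑ k, (if x = k then N k y else 0) = N x y := by simp
    rw [h1]
    have hNxy : N x y = (if x = y then p x.1 else 0) + q x.1 * M x y := rfl
    rw [hNxy, Matrix.one_apply]
    by_cases hxy : x = y
    · subst hxy
      rw [hMdiag, if_pos rfl, if_pos rfl, if_pos rfl]
      linear_combination key1 x.1
    · rw [if_neg hxy, if_neg hxy, if_neg hxy]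
      by_cases hg : x.1 = y.1
      · rw [← hg]
        linear_combination (M x y) * key2 x.1
      · rw [hMoff x y hg]; ring
  have hIsUnit : IsUnit (1 - (1/2 : ℝ) • M) := by
    have := invertibleOfRightInverse _ _ hNinv
    exact isUnit_of_invertible _
  refine ⟨1/2, by rw [abs_of_pos] <;> norm_num, hIsUnit, ?_⟩
  intro c₁ c₂ heq
  rw [Matrix.inv_eq_right_inv hNinv] at heq
  have hdiag : ∀ x, (M * N) x x = q x.1 * a x.1 := by
    intro x
    rw [Matrix.mul_apply, hsumN, hMdiag]
    simp
  have hc : ∀ x : (g : Fin R) × Fin (m g), q x.1 * a x.1 = c₁ := by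
    intro x
    have h := congrFun (congrFun heq x) x
    rw [hdiag] at h
    rw [h]
    simp [Matrix.add_apply, Matrix.smul_apply, Matrix.one_apply, hMdiag]
  obtain ⟨g₁, g₂, hg⟩ := hne
  have hq12 : q g₁ * a g₁ = q g₂ * a g₂ := by
    rw [hc ⟨g₁, ⟨0, by have := hm g₁; omega⟩⟩, hc ⟨g₂, ⟨0, by have := hm g₂; omega⟩⟩]
  have ha12 : a g₁ = a g₂ := by
    simp only [hq_def] at hq12
    have h1 := h2a g₁
    have h2 := h2a g₂
    field_simp at hq12
    nlinarith [hq12]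
  have hmm : (m g₁ : ℝ) = (m g₂ : ℝ) := by
    simp only [ha_def] at ha12
    have := inv_injective ha12
    linarith
  exact hg (by exact_mod_cast hmm)
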